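/- Let (n,k,r) be an admissible triple of parameters with n > k. Then the r-Lah distribution puts equal mass on even and on odd values: Σ_{j ∈ {k,...,n}, j even} ⌈n,j⌉_r·⦃j,k⦄_r = Σ_{j ∈ {k,...,n}, j odd} ⌈n,j⌉_r·⦃j,k⦄_r = L(n,k)_r / 2; equivalently, P[Lah(n,k)_r is even] = P[Lah(n,k)_r is odd] = 1/2. -/

import Mathlib

open Finset Filter MeasureTheory

/-- r-Stirling numbers of the first kind. -/
noncomputable def stirFir (r : ℝ) : ℕ → ℕ → ℝ
  | 0, 0 => 1
  | 0, _ + 1 => 0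
  | n + 1, 0 => ((n : ℝ) + r) * stirFir r n 0
  | n + 1, k + 1 => ((n : ℝ) + r) * stirFir r n (k + 1) + stirFir r n k

/-- r-Stirling numbers of the second kind. -/
noncomputable def stirSec (r : ℝ) : ℕ → ℕ → ℝ
  | 0, 0 => 1
  | 0, _ + 1 => 0
  | n + 1, 0 => r * stirSec r n 0
  | n + 1, k + 1 => ((k : ℝ) + 1 + r) * stirSec r n (k + 1) + stirSec r n k

/-- The r-Lah number L(n,k)_r. -/
noncomputable def lahNum (r : ℝ) (n k : ℕ) : ℝ :=
  ∑ j ∈ Finset.Icc k n, stirFir r n j * stirSec r j k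

/-- The probability mass function of the r-Lah distribution. -/
noncomputable def lahPMF (r : ℝ) (n k j : ℕ) : ℝ :=
  stirFir r n j * stirSec r j k / lahNum r n k

/-- The expectation of the r-Lah distribution. -/
noncomputable def lahExp (r : ℝ) (n k : ℕ) : ℝ :=
  (∑ j ∈ Finset.Icc k n, (j : ℝ) * stirFir r n j * stirSec r j k) / lahNum r n k

lemma stirFir_zero_of_lt (r : ℝ) : ∀ n k : ℕ, n < k → stirFir r n k = 0 := by
  intro n
  induction n with
  | zero => intro k hk; match k, hk with
      | k+1, _ => simp [stirFir]
  | succ n ih =>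
      intro k hk
      match k, hk with
      | k+1, hk =>
        simp [stirFir, ih _ (by omega : n < k + 1), ih _ (by omega : n < k)]

lemma stirSec_zero_of_lt (r : ℝ) : ∀ n k : ℕ, n < k → stirSec r n k = 0 := by
  intro n
  induction n with
  | zero => intro k hk; match k, hk with
      | k+1, _ => simp [stirSec]
  | succ n ih =>
      intro k hk
      match k, hk with
      | k+1, hk =>
        simp [stirSec, ih _ (by omega : n < k + 1), ih _ (by omega : n < k)]

noncomputable def Talt (r : ℝ) (n k : ℕ) : ℝ :=
  ∑ j ∈ Finset.range (n + 1), (-1 : ℝ) ^ j * stirFir r n j * stirSec r j k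

lemma Talt_ext (r : ℝ) (n k : ℕ) :
    ∑ j ∈ Finset.range (n + 2), (-1 : ℝ) ^ j * stirFir r n j * stirSec r j k = Talt r n k := by
  rw [Talt, Finset.sum_range_succ (n := n + 1), stirFir_zero_of_lt r n (n + 1) (by omega)]
  ring

lemma Talt_key (r : ℝ) (n k : ℕ) :
    Talt r (n + 1) k + ∑ i ∈ Finset.range (n + 1),
        (-1 : ℝ) ^ i * stirFir r n i * stirSec r (i + 1) k
      = ((n : ℝ) + r) * ∑ j ∈ Finset.range (n + 2),
          (-1 : ℝ) ^ j * stirFir r n j * stirSec r j k := by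
  have L := Finset.sum_range_succ'
    (fun j => (-1 : ℝ) ^ j * stirFir r (n + 1) j * stirSec r j k) (n + 1)
  have R := Finset.sum_range_succ'
    (fun j => (-1 : ℝ) ^ j * stirFir r n j * stirSec r j k) (n + 1)
  rw [Talt, L, R]
  have step : ∑ i ∈ Finset.range (n + 1),
      ((-1 : ℝ) ^ (i+1) * stirFir r (n + 1) (i+1) * stirSec r (i+1) k
        + (-1 : ℝ) ^ i * stirFir r n i * stirSec r (i + 1) k)
      = ∑ i ∈ Finset.range (n + 1),
        ((n : ℝ) + r) * ((-1 : ℝ) ^ (i+1) * stirFir r n (i+1) * stirSec r (i+1) k) := by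
    refine Finset.sum_congr rfl fun i _ => ?_
    simp only [stirFir]
    ring
  rw [Finset.sum_add_distrib] at step
  have c : (-1 : ℝ) ^ 0 * stirFir r (n + 1) 0 * stirSec r 0 k
      = ((n : ℝ) + r) * ((-1 : ℝ) ^ 0 * stirFir r n 0 * stirSec r 0 k) := by
    simp [stirFir]; ring
  rw [mul_add, Finset.mul_sum]
  beta_reduce at step c ⊢
  linarith [step, c]

lemma Talt_succ_zero (r : ℝ) (n : ℕ) : Talt r (n + 1) 0 = (n : ℝ) * Talt r n 0 := by
  have key := Talt_key r n 0
  rw [Talt_ext] at key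
  have h : ∑ i ∈ Finset.range (n + 1), (-1 : ℝ) ^ i * stirFir r n i * stirSec r (i + 1) 0
      = r * Talt r n 0 := by
    rw [Talt, Finset.mul_sum]
    refine Finset.sum_congr rfl fun i _ => ?_
    simp only [stirSec]
    ring
  rw [h] at key
  linarith [key]

lemma Talt_succ_succ (r : ℝ) (n k : ℕ) :
    Talt r (n + 1) (k + 1) = ((n : ℝ) - (k + 1)) * Talt r n (k + 1) - Talt r n k := by
  have key := Talt_key r n (k + 1)
  rw [Talt_ext] at key
  have h : ∑ i ∈ Finset.range (n + 1), (-1 : ℝ) ^ i * stirFir r n i * stirSec r (i + 1) (k + 1)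
      = ((k : ℝ) + 1 + r) * Talt r n (k + 1) + Talt r n k := by
    rw [Talt, Talt, Finset.mul_sum, ← Finset.sum_add_distrib]
    refine Finset.sum_congr rfl fun i _ => ?_
    simp only [stirSec]
    ring
  rw [h] at key
  linarith [key]

lemma Talt_eq_zero (r : ℝ) : ∀ n k : ℕ, k < n → Talt r n k = 0 := by
  intro n
  induction n with
  | zero => intro k hk; omega
  | succ n ih =>
    intro k hk
    match k with
    | 0 =>
      rw [Talt_succ_zero]
      rcases Nat.eq_zero_or_pos n with h | h
      · subst h; simp
      · rw [ih 0 h]; ring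
    | k + 1 =>
      rw [Talt_succ_succ]
      have hk' : k + 1 ≤ n := by omega
      rcases eq_or_lt_of_le hk' with h | h
      · rw [ih k (by omega), ← h]
        push_cast
        ring
      · rw [ih (k + 1) h, ih k (by omega)]
        ring

lemma Icc_alt_sum (r : ℝ) (n k : ℕ) (h : k ≤ n) :
    ∑ j ∈ Finset.Icc k n, (-1 : ℝ) ^ j * stirFir r n j * stirSec r j k = Talt r n k := by
  rw [Talt]
  apply Finset.sum_subset
  · intro j hj
    simp only [Finset.mem_Icc] at hj
    simp only [Finset.mem_range]
    omega
  · intro j hj hj'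
    simp only [Finset.mem_Icc, Finset.mem_range] at hj hj'
    rw [stirSec_zero_of_lt r j k (by omega)]
    ring


theorem rLah_even_odd (n k : ℕ) (r : ℝ) (hn : 1 ≤ n) (hk : k ≤ n) (hr : 0 ≤ r)
    (hmax : 0 < k ∨ 0 < r) (hkn : k < n) :
    (∑ j ∈ (Finset.Icc k n).filter (fun j => Even j),
        stirFir r n j * stirSec r j k) = lahNum r n k / 2 ∧
    (∑ j ∈ (Finset.Icc k n).filter (fun j => Odd j),
        stirFir r n j * stirSec r j k) = lahNum r n k / 2 := by
  set E := ∑ j ∈ (Finset.Icc k n).filter (fun j => Even j),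
      stirFir r n j * stirSec r j k with hE
  set O := ∑ j ∈ (Finset.Icc k n).filter (fun j => Odd j),
      stirFir r n j * stirSec r j k with hO
  have hfilter : (Finset.Icc k n).filter (fun j => Odd j)
      = (Finset.Icc k n).filter (fun j => ¬ Even j) := by
    apply Finset.filter_congr
    intro j _
    exact Nat.not_even_iff_odd.symm
  have hsum : E + O = lahNum r n k := by
    rw [hE, hO, hfilter, lahNum]
    exact Finset.sum_filter_add_sum_filter_not _ _ _
  have hdiff : E - O = 0 := by
    have h1 : ∑ j ∈ Finset.Icc k n, (-1 : ℝ) ^ j * stirFir r n j * stirSec r j k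
        = E - O := by
      rw [← Finset.sum_filter_add_sum_filter_not (Finset.Icc k n) (fun j => Even j)
        (fun j => (-1 : ℝ) ^ j * stirFir r n j * stirSec r j k)]
      have e1 : ∑ j ∈ (Finset.Icc k n).filter (fun j => Even j),
          (-1 : ℝ) ^ j * stirFir r n j * stirSec r j k = E := by
        rw [hE]
        refine Finset.sum_congr rfl fun j hj => ?_
        simp only [Finset.mem_filter] at hj
        rw [hj.2.neg_one_pow]
        ring
      have e2 : ∑ j ∈ (Finset.Icc k n).filter (fun j => ¬ Even j),
          (-1 : ℝ) ^ j * stirFir r n j * stirSec r j k = -O := by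
        rw [hO, hfilter, ← Finset.sum_neg_distrib]
        refine Finset.sum_congr rfl fun j hj => ?_
        simp only [Finset.mem_filter] at hj
        rw [(Nat.not_even_iff_odd.mp hj.2).neg_one_pow]
        ring
      rw [e1, e2]
      ring
    rw [Icc_alt_sum r n k hk, Talt_eq_zero r n k hkn] at h1
    linarith
  constructor <;> linarith
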